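/- Let a,b,c,d be real constants. With the frame change e_1* = (e_1+e_4)/√2, e_2* = (e_2-e_3)/√2, e_3* = (e_1-e_4)/√2, e_4* = (e_2+e_3)/√2, C_1* = A + e_5, C_2* = A - e_5, the structure equations of M^5(a,b,c,d) with a=c=d=0, b=1 are equivalent to: de_1* = C_1*∧e_2*, de_2* = -C_1*∧e_1*, de_3* = C_2*∧e_4*, de_4* = -C_2*∧e_3*, dC_1* = -2·e_1*∧e_2*, dC_2* = -2·e_3*∧e_4* (the structure equations of the Lie algebra su(2)⊕su(2)). -/
import Mathlib


open ExteriorAlgebra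

local notation "ι" => ExteriorAlgebra.ι ℝ

set_option maxHeartbeats 1600000 in
/-- With the frame change `e₁* = (e₁+e₄)/√2`, `e₂* = (e₂-e₃)/√2`, `e₃* = (e₁-e₄)/√2`,
`e₄* = (e₂+e₃)/√2`, `C₁* = A + e₅`, `C₂* = A - e₅`, the structure equations of
`M⁵(a,b,c,d)` with `a = c = d = 0`, `b = 1` are equivalent to the structure equations
of the Lie algebra `su(2) ⊕ su(2)`.  (Indices are shifted down by one: `e 0,…,e 4`
are the paper's `e₁,…,e₅`.) -/
theorem stmt15 {V : Type*} [AddCommGroup V] [Module ℝ V]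
    (e : Fin 5 → V) (A : V)
    (hind : LinearIndependent ℝ (Fin.cons A e : Fin 6 → V))
    (D : ExteriorAlgebra ℝ V →ₗ[ℝ] ExteriorAlgebra ℝ V) :
    ((D (ι (e 0)) = ι A * ι (e 1) + ι (e 2) * ι (e 4) ∧
      D (ι (e 1)) = -(ι A * ι (e 0)) + ι (e 3) * ι (e 4) ∧
      D (ι (e 2)) = ι A * ι (e 3) - ι (e 0) * ι (e 4) ∧
      D (ι (e 3)) = -(ι A * ι (e 2)) - ι (e 1) * ι (e 4) ∧
      D (ι (e 4)) = ι (e 0) * ι (e 2) + ι (e 1) * ι (e 3) ∧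
      D (ι A) = -(ι (e 0) * ι (e 1) + ι (e 2) * ι (e 3))) ↔
    ((D (ι ((Real.sqrt 2)⁻¹ • (e 0 + e 3))) =
        ι (A + e 4) * ι ((Real.sqrt 2)⁻¹ • (e 1 - e 2)) ∧
      D (ι ((Real.sqrt 2)⁻¹ • (e 1 - e 2))) =
        -(ι (A + e 4) * ι ((Real.sqrt 2)⁻¹ • (e 0 + e 3))) ∧
      D (ι ((Real.sqrt 2)⁻¹ • (e 0 - e 3))) =
        ι (A - e 4) * ι ((Real.sqrt 2)⁻¹ • (e 1 + e 2)) ∧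
      D (ι ((Real.sqrt 2)⁻¹ • (e 1 + e 2))) =
        -(ι (A - e 4) * ι ((Real.sqrt 2)⁻¹ • (e 0 - e 3))) ∧
      D (ι (A + e 4)) =
        (-2 : ℝ) • (ι ((Real.sqrt 2)⁻¹ • (e 0 + e 3)) * ι ((Real.sqrt 2)⁻¹ • (e 1 - e 2))) ∧
      D (ι (A - e 4)) =
        (-2 : ℝ) • (ι ((Real.sqrt 2)⁻¹ • (e 0 - e 3)) * ι ((Real.sqrt 2)⁻¹ • (e 1 + e 2)))))) := by

  have hs : ((Real.sqrt 2)⁻¹ : ℝ) * (Real.sqrt 2)⁻¹ = 2⁻¹ := by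
    rw [← mul_inv, Real.mul_self_sqrt (by norm_num)]
  have hs2 : ((Real.sqrt 2)⁻¹ : ℝ) ^ 2 = 2⁻¹ := by rw [sq, hs]
  have sw : ∀ x y : V, ι y * ι x = -(ι x * ι y) := fun x y =>
    eq_neg_of_add_eq_zero_right (ι_add_mul_swap x y)
  constructor
  · rintro ⟨h0, h1, h2, h3, h4, h5⟩
    refine ⟨?_, ?_, ?_, ?_, ?_, ?_⟩ <;>
    · simp only [map_smul, map_add, map_sub, h0, h1, h2, h3, h4, h5,
        smul_add, smul_sub, add_mul, mul_add, sub_mul, mul_sub, neg_mul, mul_neg,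
        smul_mul_assoc, mul_smul_comm, smul_smul, hs, ι_sq_zero,
        sw (e 0) (e 4), sw (e 1) (e 4), sw (e 2) (e 4), sw (e 3) (e 4),
        sw A (e 0), sw A (e 1), sw A (e 2), sw A (e 3), sw A (e 4),
        sw (e 0) (e 1), sw (e 0) (e 2), sw (e 0) (e 3),
        sw (e 1) (e 2), sw (e 1) (e 3), sw (e 2) (e 3)]
      module
  · rintro ⟨h0, h1, h2, h3, h4, h5⟩
    have k0 : D (ι (e 0)) = (Real.sqrt 2)⁻¹ • D (ι ((Real.sqrt 2)⁻¹ • (e 0 + e 3)))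
        + (Real.sqrt 2)⁻¹ • D (ι ((Real.sqrt 2)⁻¹ • (e 0 - e 3))) := by
      simp only [map_smul, map_add, map_sub, smul_smul, hs]; module
    have k1 : D (ι (e 1)) = (Real.sqrt 2)⁻¹ • D (ι ((Real.sqrt 2)⁻¹ • (e 1 - e 2)))
        + (Real.sqrt 2)⁻¹ • D (ι ((Real.sqrt 2)⁻¹ • (e 1 + e 2))) := by
      simp only [map_smul, map_add, map_sub, smul_smul, hs]; module
    have k2 : D (ι (e 2)) = (Real.sqrt 2)⁻¹ • D (ι ((Real.sqrt 2)⁻¹ • (e 1 + e 2)))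
        - (Real.sqrt 2)⁻¹ • D (ι ((Real.sqrt 2)⁻¹ • (e 1 - e 2))) := by
      simp only [map_smul, map_add, map_sub, smul_smul, hs]; module
    have k3 : D (ι (e 3)) = (Real.sqrt 2)⁻¹ • D (ι ((Real.sqrt 2)⁻¹ • (e 0 + e 3)))
        - (Real.sqrt 2)⁻¹ • D (ι ((Real.sqrt 2)⁻¹ • (e 0 - e 3))) := by
      simp only [map_smul, map_add, map_sub, smul_smul, hs]; module
    have k4 : D (ι (e 4)) = (2⁻¹ : ℝ) • D (ι (A + e 4)) - (2⁻¹ : ℝ) • D (ι (A - e 4)) := by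
      simp only [map_smul, map_add, map_sub]; module
    have k5 : D (ι A) = (2⁻¹ : ℝ) • D (ι (A + e 4)) + (2⁻¹ : ℝ) • D (ι (A - e 4)) := by
      simp only [map_smul, map_add, map_sub]; module
    refine ⟨?_, ?_, ?_, ?_, ?_, ?_⟩ <;>
    · first
        | rw [k0, h0, h2] | rw [k1, h1, h3] | rw [k2, h3, h1]
        | rw [k3, h0, h2] | rw [k4, h4, h5] | rw [k5, h4, h5]
      simp only [
        map_smul, map_add, map_sub,
        smul_add, smul_sub, add_mul, mul_add, sub_mul, mul_sub, neg_mul, mul_neg,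
        smul_mul_assoc, mul_smul_comm, smul_smul, hs, ι_sq_zero,
        sw (e 0) (e 4), sw (e 1) (e 4), sw (e 2) (e 4), sw (e 3) (e 4),
        sw A (e 0), sw A (e 1), sw A (e 2), sw A (e 3), sw A (e 4),
        sw (e 0) (e 1), sw (e 0) (e 2), sw (e 0) (e 3),
        sw (e 1) (e 2), sw (e 1) (e 3), sw (e 2) (e 3)]
      match_scalars <;> nlinarith [hs, hs2]
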